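/- arXiv:1209.5839 — 4 statements merged into one kernel-verified Lean document; each statement's English description precedes it below -/
import Mathlib

section
/- Let K be a nonempty compact subset of ℂ. There exists a complex number μ ≠ 0 with sup_{λ ∈ K} |μ - λ| < |μ| if and only if 0 does not belong to the closed convex hull of K. -/
open Function in
lemma isCompact_convexHull_complex {K : Set ℂ} (hK : IsCompact K) (hne : K.Nonempty) :
    IsCompact (convexHull ℝ K) := by
  obtain ⟨l₀, hl₀⟩ := hne
  set φ : (Fin 3 → ℝ) × (Fin 3 → ℂ) → ℂ := fun p => ∑ i, p.1 i • p.2 i with hφ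
  set S : Set ((Fin 3 → ℝ) × (Fin 3 → ℂ)) := stdSimplex ℝ (Fin 3) ×ˢ Set.univ.pi fun _ => K
    with hSdef
  have hS : IsCompact S := IsCompact.prod (isCompact_stdSimplex ℝ (Fin 3)) (isCompact_univ_pi fun _ => hK)
  have hcont : Continuous φ := by
    apply continuous_finset_sum
    intro i _
    exact ((continuous_apply i).comp continuous_fst).smul ((continuous_apply i).comp continuous_snd)
  have himg : convexHull ℝ K = φ '' S := by
    apply Set.Subset.antisymm
    · intro x hx
      obtain ⟨ι, hι, z, w, hzs, hind, hwpos, hwsum, hx⟩ :=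
        eq_pos_convex_span_of_mem_convexHull hx
      have hcard : Fintype.card ι ≤ 3 := by
        have h1 := hind.card_le_finrank_succ
        have h2 : Module.finrank ℝ (vectorSpan ℝ (Set.range z)) ≤ Module.finrank ℝ ℂ :=
          Submodule.finrank_le _
        have h3 : Module.finrank ℝ ℂ = 2 := Complex.finrank_real_complex
        omega
      obtain ⟨g⟩ : Nonempty (ι ↪ Fin 3) := by
        rw [Function.Embedding.nonempty_iff_card_le]
        simpa using hcard
      have hgen : ∀ {M : Type} [AddCommMonoid M] (F : Fin 3 → M),
          (∀ j, (∀ i, g i ≠ j) → F j = 0) → ∑ j, F j = ∑ i, F (g i) := by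
        intro M _ F hF
        rw [← Finset.sum_map Finset.univ g F]
        refine (Finset.sum_subset (Finset.subset_univ _) ?_).symm
        intro j _ hj
        exact hF j fun i hi => hj (Finset.mem_map.mpr ⟨i, Finset.mem_univ i, hi⟩)
      set w' : Fin 3 → ℝ := Function.extend g w 0 with hw'
      set z' : Fin 3 → ℂ := Function.extend g z (fun _ => l₀) with hz'
      refine ⟨(w', z'), ⟨⟨?_, ?_⟩, ?_⟩, ?_⟩
      · intro j
        show 0 ≤ w' j
        by_cases h : ∃ i, g i = j
        · obtain ⟨i, rfl⟩ := h
          rw [hw', g.injective.extend_apply]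
          exact (hwpos i).le
        · rw [hw', Function.extend_apply' _ _ _ h]
          rfl
      · have : ∑ j, w' j = ∑ i, w' (g i) := by
          apply hgen
          intro j hj
          rw [hw', Function.extend_apply' _ _ _ (by simpa using hj)]
          rfl
        rw [this]
        simp only [hw', g.injective.extend_apply]
        exact hwsum
      · intro j _
        show z' j ∈ K
        by_cases h : ∃ i, g i = j
        · obtain ⟨i, rfl⟩ := h
          rw [hz', g.injective.extend_apply]
          exact hzs (Set.mem_range_self i)
        · rw [hz', Function.extend_apply' _ _ _ h]
          exact hl₀
      · show ∑ j, w' j • z' j = x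
        have : ∑ j, w' j • z' j = ∑ i, w' (g i) • z' (g i) := by
          apply hgen
          intro j hj
          rw [hw', Function.extend_apply' _ _ _ (by simpa using hj)]
          simp
        rw [this]
        simp only [hw', hz', g.injective.extend_apply]
        exact hx
    · rintro x ⟨⟨w, z⟩, ⟨⟨hw0, hw1⟩, hzK⟩, rfl⟩
      exact (convex_convexHull ℝ K).sum_mem (fun i _ => hw0 i) hw1
        (fun i _ => subset_convexHull ℝ K (hzK i (Set.mem_univ i)))
  rw [himg]
  exact hS.image hcont

/-- For a nonempty compact `K ⊆ ℂ`, there exists `μ ≠ 0` with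
`sup_{λ ∈ K} |μ - λ| < |μ|` if and only if `0` is not in the (closed) convex hull
of `K`. -/
theorem stmt4 (K : Set ℂ) (hK : IsCompact K) (hne : K.Nonempty) :
    (∃ μ : ℂ, μ ≠ 0 ∧ sSup ((fun lam : ℂ => ‖μ - lam‖) '' K) < ‖μ‖)
      ↔ (0 : ℂ) ∉ convexHull ℝ K := by
  constructor
  · rintro ⟨μ, hμ0, hs⟩ h0
    set s := sSup ((fun lam : ℂ => ‖μ - lam‖) '' K) with hsdef
    have hbdd : BddAbove ((fun lam : ℂ => ‖μ - lam‖) '' K) :=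
      (hK.image (continuous_norm.comp (continuous_const.sub continuous_id))).bddAbove
    have hsub : K ⊆ Metric.closedBall μ s := by
      intro lam hl
      have : ‖μ - lam‖ ≤ s := le_csSup hbdd ⟨lam, hl, rfl⟩
      simpa [Metric.mem_closedBall, Complex.dist_eq, ← norm_neg (lam - μ),
        neg_sub] using this
    have hhull : convexHull ℝ K ⊆ Metric.closedBall μ s :=
      convexHull_min hsub (convex_closedBall μ s)
    have := hhull h0
    have : ‖μ‖ ≤ s := by
      simpa [Metric.mem_closedBall, Complex.dist_eq, ← norm_neg (0 - μ),
        neg_sub] using this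
    linarith
  · intro h0
    have hcomp : IsCompact (convexHull ℝ K) := isCompact_convexHull_complex hK hne
    obtain ⟨f, u, hfu, hu0⟩ :=
      geometric_hahn_banach_closed_point (convex_convexHull ℝ K) hcomp.isClosed h0
    have hu : u < 0 := by simpa using hu0
    set c : ℝ := -u with hc
    have hcpos : 0 < c := by linarith
    have hfK : ∀ lam ∈ K, f lam ≤ -c := by
      intro lam hl
      have := hfu lam (subset_convexHull ℝ K hl)
      simp only [hc]; linarith
    obtain ⟨M, hM⟩ := hK.isBounded.exists_norm_le
    have hflin : ∀ z : ℂ, f z = z.re * f 1 + z.im * f Complex.I := by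
      intro z
      have hz : z = z.re • (1 : ℂ) + z.im • Complex.I := by
        simp [Complex.real_smul, Complex.re_add_im]
      calc f z = f (z.re • (1 : ℂ) + z.im • Complex.I) := by rw [← hz]
        _ = z.re * f 1 + z.im * f Complex.I := by
            rw [map_add, map_smul, map_smul]; simp [smul_eq_mul]
    set t : ℝ := (M ^ 2 + 1) / (2 * c) with ht
    have htpos : 0 < t := div_pos (by positivity) (by linarith)
    set μ : ℂ := ⟨-t * f 1, -t * f Complex.I⟩ with hμ
    obtain ⟨lam₀, hl₀⟩ := hne
    refine ⟨μ, ?_, ?_⟩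
    · intro hμ0
      have h1 : f 1 = 0 := by
        have : -t * f 1 = 0 := congrArg Complex.re hμ0
        have := mul_eq_zero.mp this
        rcases this with h | h
        · exact absurd h (by simp; linarith)
        · exact h
      have h2 : f Complex.I = 0 := by
        have : -t * f Complex.I = 0 := congrArg Complex.im hμ0
        rcases mul_eq_zero.mp this with h | h
        · exact absurd h (by simp; linarith)
        · exact h
      have := hfK lam₀ hl₀
      rw [hflin lam₀, h1, h2] at this
      simp at this; linarith
    · -- key estimate
      have key : ∀ lam ∈ K, (‖μ - lam‖) ^ 2 ≤ (‖μ‖) ^ 2 - 1 := by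
        intro lam hl
        have hnorm : ‖lam‖ ≤ M := by
          simpa using hM lam hl
        have hsq : (‖lam‖) ^ 2 ≤ M ^ 2 := by
          have := norm_nonneg lam
          nlinarith
        have hdot : μ.re * lam.re + μ.im * lam.im ≥ t * c := by
          have hf : f lam ≤ -c := hfK lam hl
          have : μ.re * lam.re + μ.im * lam.im = -t * f lam := by
            rw [hflin lam]; simp [hμ]; ring
          rw [this]
          nlinarith
        have h2tc : 2 * t * c = M ^ 2 + 1 := by
          rw [ht]; field_simp
        have expand : (‖μ - lam‖) ^ 2
            = (‖μ‖) ^ 2 - 2 * (μ.re * lam.re + μ.im * lam.im)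
              + (‖lam‖) ^ 2 := by
          rw [Complex.sq_norm, Complex.sq_norm, Complex.sq_norm]
          simp [Complex.normSq_apply, Complex.sub_re, Complex.sub_im]
          ring
        rw [expand]
        nlinarith
      have hb0 : 0 ≤ (‖μ‖) ^ 2 - 1 := by
        have := key lam₀ hl₀
        nlinarith [norm_nonneg (μ - lam₀)]
      set b : ℝ := Real.sqrt ((‖μ‖) ^ 2 - 1) with hb
      have hble : ∀ lam ∈ K, ‖μ - lam‖ ≤ b := by
        intro lam hl
        have := key lam hl
        have h1 : ‖μ - lam‖ = Real.sqrt ((‖μ - lam‖) ^ 2) := by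
          rw [Real.sqrt_sq (norm_nonneg _)]
        rw [h1, hb]
        exact Real.sqrt_le_sqrt this
      have hblt : b < ‖μ‖ := by
        rw [hb]
        have : (‖μ‖) ^ 2 - 1 < (‖μ‖) ^ 2 := by linarith
        calc Real.sqrt ((‖μ‖) ^ 2 - 1)
            < Real.sqrt ((‖μ‖) ^ 2) := Real.sqrt_lt_sqrt hb0 this
          _ = ‖μ‖ := Real.sqrt_sq (norm_nonneg μ)
      have hsup : sSup ((fun lam : ℂ => ‖μ - lam‖) '' K) ≤ b := by
        apply Real.sSup_le
        · rintro x ⟨lam, hl, rfl⟩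
          exact hble lam hl
        · exact Real.sqrt_nonneg _
      linarith
end

section
/- Let S = {z ∈ ℂ : |z - μ₀| ≤ R} be a closed disk with 0 ∉ S (so |μ₀| > R). Then for every n ≥ 1 and every choice of nonzero complex parameters τ₁, …, τ_n, we have max_{z ∈ S} |∏_{m=1}^n (1 - τ_m z)| ≥ (R/|μ₀|)^n, with equality when τ₁ = ⋯ = τ_n = 1/μ₀. -/
open Metric Set

/-- For a disk `S = {z : |z - μ₀| ≤ R}` with `0 < R < |μ₀|`, every choice of nonzero
parameters `τ₁, …, τ_n` satisfies `max_{z ∈ S} |∏ (1 - τ_m z)| ≥ (R/|μ₀|)^n`, and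
equality holds when all `τ_m = 1/μ₀`. -/
theorem stmt6 (μ₀ : ℂ) (R : ℝ) (hR : 0 < R) (h : R < ‖μ₀‖) (n : ℕ) (hn : 1 ≤ n) :
    (∀ τ : Fin n → ℂ, (∀ m, τ m ≠ 0) →
      (R / ‖μ₀‖) ^ n ≤
        sSup ((fun z : ℂ => ‖∏ m : Fin n, (1 - τ m * z)‖) ''
          {z : ℂ | ‖z - μ₀‖ ≤ R})) ∧
    sSup ((fun z : ℂ => ‖∏ _m : Fin n, (1 - μ₀⁻¹ * z)‖) ''
        {z : ℂ | ‖z - μ₀‖ ≤ R}) = (R / ‖μ₀‖) ^ n := by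
  have hμ : μ₀ ≠ 0 := by
    intro h0; rw [h0] at h; simp at h; linarith
  have habs : 0 < ‖μ₀‖ := hR.trans h
  have hSdef : {z : ℂ | ‖z - μ₀‖ ≤ R} = closedBall μ₀ R := by
    ext z; simp [Complex.dist_eq]
  constructor
  · intro τ hτ
    set F : ℂ → ℂ := fun w => ∏ m : Fin n, (w - τ m * (μ₀ * w + R)) with hF
    have hFd : Differentiable ℂ F := by
      rw [show F = ∏ m : Fin n, (fun w : ℂ => w - τ m * (μ₀ * w + R)) by ext w; simp [hF, Finset.prod_apply]]
      apply Differentiable.finset_prod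
      intro m _
      exact differentiable_id.sub ((differentiable_const _).mul
        (((differentiable_const _).mul differentiable_id).add (differentiable_const _)))
    -- bounded above
    have hbdd : BddAbove ((fun z : ℂ => ‖∏ m : Fin n, (1 - τ m * z)‖) ''
        {z : ℂ | ‖z - μ₀‖ ≤ R}) := by
      rw [hSdef]
      exact ((isCompact_closedBall μ₀ R).image (by continuity)).bddAbove
    set C := sSup ((fun z : ℂ => ‖∏ m : Fin n, (1 - τ m * z)‖) ''
        {z : ℂ | ‖z - μ₀‖ ≤ R}) with hC
    have key : ∀ w ∈ frontier (ball (0:ℂ) 1), ‖F w‖ ≤ C := by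
      intro w hw
      rw [frontier_ball (0:ℂ) one_ne_zero, mem_sphere_zero_iff_norm] at hw
      have hw0 : w ≠ 0 := by intro h0; rw [h0] at hw; simp at hw
      set z : ℂ := μ₀ + R * w⁻¹ with hz
      have hzS : z ∈ {z : ℂ | ‖z - μ₀‖ ≤ R} := by
        simp only [mem_setOf_eq, hz, add_sub_cancel_left, norm_mul]
        rw [norm_inv]
        simp [hw, abs_of_pos hR]
      have hfac : F w = w ^ n * ∏ m : Fin n, (1 - τ m * z) := by
        rw [hF]
        simp only
        rw [show (w:ℂ)^n = ∏ _m : Fin n, w by simp, ← Finset.prod_mul_distrib]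
        apply Finset.prod_congr rfl
        intro m _
        rw [hz]
        field_simp
      calc ‖F w‖ = ‖∏ m : Fin n, (1 - τ m * z)‖ := by
            rw [hfac]; simp [hw]
        _ ≤ C := le_csSup hbdd ⟨z, hzS, rfl⟩
    have hmem : (-(R:ℂ)/μ₀) ∈ closure (ball (0:ℂ) 1) := by
      apply subset_closure
      simp only [mem_ball, Complex.dist_eq, sub_zero]
      rw [show ‖(-(R:ℂ)/μ₀)‖ = R / ‖μ₀‖ by
        rw [norm_div, norm_neg]; simp [abs_of_pos hR]]
      rw [div_lt_one habs]; exact h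
    have := Complex.norm_le_of_forall_mem_frontier_norm_le isBounded_ball
      hFd.diffContOnCl key hmem
    have hFval : F (-(R:ℂ)/μ₀) = (-(R:ℂ)/μ₀)^n := by
      rw [hF]
      simp only
      rw [show ((-(R:ℂ)/μ₀))^n = ∏ _m : Fin n, (-(R:ℂ)/μ₀) by simp [div_pow]]
      apply Finset.prod_congr rfl
      intro m _
      field_simp
      ring
    rw [hFval] at this
    calc (R / ‖μ₀‖) ^ n = ‖(-(R:ℂ)/μ₀)^n‖ := by
          rw [norm_pow]
          congr 1
          rw [norm_div, norm_neg]
          simp [abs_of_pos hR]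
      _ ≤ C := this
  · apply IsGreatest.csSup_eq
    constructor
    · refine ⟨μ₀ + R, by simp [abs_of_pos hR], ?_⟩
      simp only
      rw [Finset.prod_const]
      simp only [Finset.card_fin]
      rw [norm_pow]
      congr 1
      rw [show (1 : ℂ) - μ₀⁻¹ * (μ₀ + R) = -(R/μ₀) by field_simp; ring]
      rw [norm_neg, norm_div]
      simp [abs_of_pos hR]
    · rintro x ⟨z, hzS, rfl⟩
      simp only [mem_setOf_eq] at hzS
      simp only
      rw [Finset.prod_const]
      simp only [Finset.card_fin]
      rw [norm_pow]
      apply pow_le_pow_left₀ (by positivity)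
      rw [show (1 : ℂ) - μ₀⁻¹ * z = (μ₀ - z)/μ₀ by field_simp]
      rw [norm_div, norm_sub_rev]
      gcongr
end

section
/- Let 0 < a < b, φ ∈ ℝ, and let the μ_m = (b+a)/2 + ((b-a)/2)·cos((2m-1)π/(2n)) be the optimal points for the real segment [a,b]. Then the rotated points e^{iφ} μ_m minimize max over the rotated segment e^{iφ}[a,b] of |∏(1 - z/ν_m)| among all choices of points ν_m: explicitly, min over {ν_m} of max_{z ∈ e^{iφ}[a,b]} |∏_{m=1}^n (1 - z/ν_m)| = max_{x ∈ [a,b]} |∏_{m=1}^n (1 - x/μ_m)|. -/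
open Real

open Polynomial

lemma chebDeg (n : ℕ) : (Polynomial.Chebyshev.T ℝ (n:ℤ)).natDegree ≤ n ∧
    (1 ≤ n → (Polynomial.Chebyshev.T ℝ (n:ℤ)).coeff n = 2^(n-1)) := by
  induction n using Nat.strong_induction_on with
  | _ n ih =>
    match n with
    | 0 => simp [Polynomial.Chebyshev.T_zero]
    | 1 => simp [Polynomial.Chebyshev.T_one]
    | (k+2) =>
      have h1 := ih (k+1) (by omega)
      have h0 := ih k (by omega)
      rw [show ((k+2:ℕ):ℤ) = ((k+1:ℕ):ℤ)+1 by push_cast; ring,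
        Polynomial.Chebyshev.T_add_one, show ((k+1:ℕ):ℤ)-1 = (k:ℤ) by push_cast; ring]
      have hX : (2 * X * Polynomial.Chebyshev.T ℝ ((k+1:ℕ):ℤ)) =
          C 2 * (X * Polynomial.Chebyshev.T ℝ ((k+1:ℕ):ℤ)) := by
        rw [← mul_assoc, show (C 2 : ℝ[X]) = 2 from map_ofNat C 2]
      constructor
      · refine (natDegree_sub_le _ _).trans ?_
        have hx : (X * Polynomial.Chebyshev.T ℝ ((k+1:ℕ):ℤ)).natDegree ≤ 1 + (k+1) := by
          refine natDegree_mul_le.trans ?_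
          have := h1.1
          simp only [natDegree_X]
          omega
        have : (2 * X * Polynomial.Chebyshev.T ℝ ((k+1:ℕ):ℤ)).natDegree ≤ k+2 := by
          rw [hX]
          refine natDegree_mul_le.trans ?_
          simp only [natDegree_C]
          omega
        have := h0.1
        omega
      · intro _
        rw [coeff_sub, hX, coeff_C_mul, coeff_X_mul,
          coeff_eq_zero_of_natDegree_lt (lt_of_le_of_lt h0.1 (by omega)),
          h1.2 (by omega)]
        simp [pow_succ]
        ring

lemma theta_mem (n : ℕ) (hn : 1 ≤ n) (m : Fin n) :
    (2*(m:ℝ)+1)*π/(2*n) ∈ Set.Icc (0:ℝ) π := by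
  have hπ := Real.pi_pos
  have hm : (m:ℝ) ≤ (n:ℝ) - 1 := by
    have := m.2
    have : (m:ℝ) + 1 ≤ (n:ℝ) := by exact_mod_cast this
    linarith
  have hn' : (0:ℝ) < n := by exact_mod_cast hn
  constructor
  · positivity
  · rw [div_le_iff₀ (by positivity)]
    nlinarith

lemma cheb_root (n : ℕ) (hn : 1 ≤ n) (m : Fin n) :
    (Polynomial.Chebyshev.T ℝ (n:ℤ)).eval (Real.cos ((2*(m:ℝ)+1)*π/(2*n))) = 0 := by
  rw [Polynomial.Chebyshev.T_real_cos]
  rw [Real.cos_eq_zero_iff]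
  refine ⟨m, ?_⟩
  have hn' : (n:ℝ) ≠ 0 := by positivity
  push_cast
  field_simp

lemma cos_theta_inj (n : ℕ) (hn : 1 ≤ n) :
    Function.Injective (fun m : Fin n => Real.cos ((2*(m:ℝ)+1)*π/(2*n))) := by
  intro i j hij
  have hπ := Real.pi_pos
  have := Real.injOn_cos (theta_mem n hn i) (theta_mem n hn j) hij
  have hn' : (0:ℝ) < n := by exact_mod_cast hn
  have : (i:ℝ) = (j:ℝ) := by
    field_simp at this
    linarith
  exact Fin.ext (by exact_mod_cast this)

lemma chebProd (n : ℕ) (hn : 1 ≤ n) :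
    Polynomial.Chebyshev.T ℝ (n:ℤ) =
      C ((2:ℝ)^(n-1)) * ∏ m : Fin n, (X - C (Real.cos ((2*(m:ℝ)+1)*π/(2*n)))) := by
  set Q : ℝ[X] := ∏ m : Fin n, (X - C (Real.cos ((2*(m:ℝ)+1)*π/(2*n)))) with hQ
  have hQm : Q.Monic := monic_prod_of_monic _ _ fun m _ => monic_X_sub_C _
  have hQd : Q.natDegree = n := by
    rw [hQ, natDegree_prod _ _ (fun m _ => X_sub_C_ne_zero _)]
    simp
  set P : ℝ[X] := C ((2:ℝ)^(n-1)) * Q with hP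
  have h2 : ((2:ℝ)^(n-1)) ≠ 0 := by positivity
  have hPd : P.natDegree ≤ n := by
    rw [hP, natDegree_C_mul h2, hQd]
  have hPc : P.coeff n = 2^(n-1) := by
    rw [hP, coeff_C_mul, ← hQd, ← Polynomial.leadingCoeff, hQm.leadingCoeff, mul_one]
  set D := Polynomial.Chebyshev.T ℝ (n:ℤ) - P with hD
  have hTd := chebDeg n
  have hDd : D.natDegree < n := by
    rcases eq_or_ne D 0 with h | h
    · rw [h]; simpa using (by omega : 0 < n)
    · have hle : D.natDegree ≤ n := (natDegree_sub_le _ _).trans (sup_le hTd.1 hPd)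
      rcases lt_or_eq_of_le hle with h' | h'
      · exact h'
      · exfalso
        have : D.coeff n = 0 := by
          rw [hD, coeff_sub, hPc, hTd.2 hn, sub_self]
        have := Polynomial.leadingCoeff_ne_zero.mpr h
        rw [Polynomial.leadingCoeff, h'] at this
        exact this ‹D.coeff n = 0›
  have hD0 : D = 0 := by
    apply Polynomial.eq_zero_of_natDegree_lt_card_of_eval_eq_zero D (cos_theta_inj n hn)
    · intro m
      show D.eval _ = 0
      rw [hD, Polynomial.eval_sub, cheb_root n hn m, hP, Polynomial.eval_mul]
      have : Q.eval (Real.cos ((2*(m:ℝ)+1)*π/(2*n))) = 0 := by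
        rw [hQ, Polynomial.eval_prod]
        apply Finset.prod_eq_zero (Finset.mem_univ m)
        simp
      rw [this, mul_zero, sub_zero]
    · simpa using hDd
  exact sub_eq_zero.mp hD0

lemma prod_cos (n : ℕ) (hn : 1 ≤ n) (t : ℝ) :
    ∏ m : Fin n, (Real.cos t - Real.cos ((2*(m:ℝ)+1)*π/(2*n)))
      = Real.cos (n*t) / 2^(n-1) := by
  have h := congrArg (Polynomial.eval (Real.cos t)) (chebProd n hn)
  rw [Polynomial.Chebyshev.T_real_cos, Polynomial.eval_mul, Polynomial.eval_C,
    Polynomial.eval_prod] at h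
  simp only [Polynomial.eval_sub, Polynomial.eval_X, Polynomial.eval_C] at h
  rw [show ((n:ℤ):ℝ) = (n:ℝ) by push_cast; ring] at h
  rw [eq_div_iff (by positivity : (2:ℝ)^(n-1) ≠ 0), h]
  ring

lemma mu_pos (a b : ℝ) (ha : 0 < a) (hab : a < b) (n : ℕ) (μ : Fin n → ℝ)
    (hμ : ∀ m : Fin n, μ m = (b + a) / 2 +
      (b - a) / 2 * Real.cos ((2 * (m : ℝ) + 1) * π / (2 * n))) (m : Fin n) :
    0 < μ m := by
  have h1 : -1 ≤ Real.cos ((2 * (m : ℝ) + 1) * π / (2 * n)) := Real.neg_one_le_cos _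
  have h2 : (0:ℝ) < (b-a)/2 := by linarith
  rw [hμ m]
  nlinarith

lemma Qeval (a b : ℝ) (ha : 0 < a) (hab : a < b) (n : ℕ) (hn : 1 ≤ n) (μ : Fin n → ℝ)
    (hμ : ∀ m : Fin n, μ m = (b + a) / 2 +
      (b - a) / 2 * Real.cos ((2 * (m : ℝ) + 1) * π / (2 * n))) (t : ℝ) :
    ∏ m : Fin n, (1 - ((b+a)/2 + (b-a)/2 * Real.cos t)/μ m)
      = (-1:ℝ)^n * (((b-a)/2)^n * Real.cos (n*t)) / (2^(n-1) * ∏ m : Fin n, μ m) := by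
  have hd : (0:ℝ) < (b-a)/2 := by linarith
  have hμp := mu_pos a b ha hab n μ hμ
  have step : ∀ m : Fin n, (1 - ((b+a)/2 + (b-a)/2 * Real.cos t)/μ m)
      = (-((b-a)/2) * (Real.cos t - Real.cos ((2*(m:ℝ)+1)*π/(2*n)))) / μ m := by
    intro m
    rw [eq_div_iff (hμp m).ne']
    rw [sub_mul, one_mul, div_mul_cancel₀ _ (hμp m).ne']
    rw [hμ m]
    ring
  rw [Finset.prod_congr rfl (fun m _ => step m), Finset.prod_div_distrib,
    Finset.prod_mul_distrib, Finset.prod_const, prod_cos n hn t]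
  simp only [Finset.card_univ, Fintype.card_fin]
  rw [neg_pow]
  field_simp

lemma Qbound (a b : ℝ) (ha : 0 < a) (hab : a < b) (n : ℕ) (hn : 1 ≤ n) (μ : Fin n → ℝ)
    (hμ : ∀ m : Fin n, μ m = (b + a) / 2 +
      (b - a) / 2 * Real.cos ((2 * (m : ℝ) + 1) * π / (2 * n)))
    (x : ℝ) (hx : x ∈ Set.Icc a b) :
    |∏ m : Fin n, (1 - x/μ m)| ≤ ((b-a)/2)^n / (2^(n-1) * ∏ m : Fin n, μ m) := by
  have hd : (0:ℝ) < (b-a)/2 := by linarith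
  have hμp := mu_pos a b ha hab n μ hμ
  have hprod : (0:ℝ) < ∏ m : Fin n, μ m := Finset.prod_pos fun m _ => hμp m
  set y := (x - (b+a)/2) / ((b-a)/2) with hy
  have hy1 : -1 ≤ y := by
    rw [hy, le_div_iff₀ hd]
    have := hx.1
    linarith
  have hy2 : y ≤ 1 := by
    rw [hy, div_le_iff₀ hd]
    have := hx.2
    linarith
  have hba : b - a ≠ 0 := by linarith
  have hxe : x = (b+a)/2 + (b-a)/2 * Real.cos (Real.arccos y) := by
    rw [Real.cos_arccos hy1 hy2, hy]
    field_simp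
    ring
  rw [hxe, Qeval a b ha hab n hn μ hμ]
  rw [abs_div, abs_mul, abs_mul, abs_pow, abs_pow, abs_neg, abs_one, one_pow, one_mul,
    abs_of_pos hd, abs_of_pos (by positivity : (0:ℝ) < 2^(n-1) * ∏ m : Fin n, μ m)]
  rw [div_le_div_iff₀ (by positivity) (by positivity)]
  have hc : |Real.cos ((n:ℝ) * Real.arccos y)| ≤ 1 := Real.abs_cos_le_one _
  have h1 : ((b-a)/2)^n * |Real.cos ((n:ℝ) * Real.arccos y)| ≤ ((b-a)/2)^n :=
    mul_le_of_le_one_right (by positivity) hc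
  exact mul_le_mul_of_nonneg_right h1 (by positivity)

lemma Qosc (a b : ℝ) (ha : 0 < a) (hab : a < b) (n : ℕ) (hn : 1 ≤ n) (μ : Fin n → ℝ)
    (hμ : ∀ m : Fin n, μ m = (b + a) / 2 +
      (b - a) / 2 * Real.cos ((2 * (m : ℝ) + 1) * π / (2 * n)))
    (k : ℕ) :
    ∏ m : Fin n, (1 - ((b+a)/2 + (b-a)/2 * Real.cos ((k:ℝ)*π/(n:ℝ)))/μ m)
      = (-1:ℝ)^(n+k) * (((b-a)/2)^n / (2^(n-1) * ∏ m : Fin n, μ m)) := by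
  have hn' : (n:ℝ) ≠ 0 := by positivity
  rw [Qeval a b ha hab n hn μ hμ]
  have : (n:ℝ) * ((k:ℝ)*π/(n:ℝ)) = (k:ℝ)*π := by field_simp
  rw [this]
  have : Real.cos ((k:ℝ)*π) = (-1:ℝ)^k := by
    simpa using Real.cos_add_nat_mul_pi 0 k
  rw [this, pow_add]
  ring

lemma supQ (a b : ℝ) (ha : 0 < a) (hab : a < b) (n : ℕ) (hn : 1 ≤ n) (μ : Fin n → ℝ)
    (hμ : ∀ m : Fin n, μ m = (b + a) / 2 +
      (b - a) / 2 * Real.cos ((2 * (m : ℝ) + 1) * π / (2 * n))) :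
    IsGreatest ((fun x : ℝ => |∏ m : Fin n, (1 - x/μ m)|) '' Set.Icc a b)
      (((b-a)/2)^n / (2^(n-1) * ∏ m : Fin n, μ m)) := by
  constructor
  · refine ⟨b, ⟨le_of_lt hab, le_refl b⟩, ?_⟩
    have hb : b = (b+a)/2 + (b-a)/2 * Real.cos (((0:ℕ):ℝ)*π/(n:ℝ)) := by
      norm_num
      ring
    have := Qosc a b ha hab n hn μ hμ 0
    rw [← hb] at this
    simp only [this]
    have hd : (0:ℝ) < (b-a)/2 := by linarith
    have hprod : (0:ℝ) < ∏ m : Fin n, μ m :=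
      Finset.prod_pos fun m _ => mu_pos a b ha hab n μ hμ m
    rw [abs_mul, abs_pow, abs_neg, abs_one, one_pow, one_mul, abs_of_nonneg
      (le_of_lt (div_pos (pow_pos hd n) (mul_pos (by positivity) hprod)))]
  · rintro r ⟨x, hx, rfl⟩
    exact Qbound a b ha hab n hn μ hμ x hx

lemma xpt_mem (a b : ℝ) (ha : 0 < a) (hab : a < b) (n : ℕ) (hn : 1 ≤ n) (k : ℕ) :
    (b+a)/2 + (b-a)/2 * Real.cos ((k:ℝ)*π/(n:ℝ)) ∈ Set.Icc a b := by
  have h1 : -1 ≤ Real.cos ((k:ℝ)*π/(n:ℝ)) := Real.neg_one_le_cos _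
  have h2 : Real.cos ((k:ℝ)*π/(n:ℝ)) ≤ 1 := Real.cos_le_one _
  have hd : (0:ℝ) < (b-a)/2 := by linarith
  constructor <;> nlinarith

lemma xpt_anti (a b : ℝ) (hab : a < b) (n : ℕ) (hn : 1 ≤ n) (k l : ℕ)
    (hkl : k < l) (hl : l ≤ n) :
    (b+a)/2 + (b-a)/2 * Real.cos ((l:ℝ)*π/(n:ℝ))
      < (b+a)/2 + (b-a)/2 * Real.cos ((k:ℝ)*π/(n:ℝ)) := by
  have hπ := Real.pi_pos
  have hn' : (0:ℝ) < n := by exact_mod_cast hn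
  have hd : (0:ℝ) < (b-a)/2 := by linarith
  have hkm : (k:ℝ)*π/(n:ℝ) ∈ Set.Icc 0 π := by
    constructor
    · positivity
    · rw [div_le_iff₀ hn']
      have : (k:ℝ) ≤ n := by
        have : (k:ℕ) ≤ n := by omega
        exact_mod_cast this
      nlinarith
  have hlm : (l:ℝ)*π/(n:ℝ) ∈ Set.Icc 0 π := by
    constructor
    · positivity
    · rw [div_le_iff₀ hn']
      have : (l:ℝ) ≤ n := by exact_mod_cast hl
      nlinarith
  have hlt : (k:ℝ)*π/(n:ℝ) < (l:ℝ)*π/(n:ℝ) := by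
    have hk : (k:ℝ) < l := by exact_mod_cast hkl
    rw [div_lt_div_iff₀ hn' hn']
    nlinarith [mul_pos hπ hn']
  have hcos := Real.strictAntiOn_cos hkm hlm hlt
  nlinarith

lemma ivt_helper (f : ℝ → ℝ) (hf : Continuous f) (u v : ℝ) (huv : u < v)
    (hsign : f u * f v < 0) : ∃ y ∈ Set.Ioo u v, f y = 0 := by
  rcases lt_trichotomy (f u) 0 with h | h | h
  · have hv : 0 < f v := by nlinarith
    have := intermediate_value_Ioo (le_of_lt huv) hf.continuousOn
      (Set.mem_Ioo.mpr ⟨h, hv⟩)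
    obtain ⟨y, hy, hy0⟩ := this
    exact ⟨y, hy, hy0⟩
  · simp [h] at hsign
  · have hv : f v < 0 := by nlinarith
    have := intermediate_value_Ioo' (le_of_lt huv) hf.continuousOn
      (Set.mem_Ioo.mpr ⟨hv, h⟩)
    obtain ⟨y, hy, hy0⟩ := this
    exact ⟨y, hy, hy0⟩

lemma real_minimax (a b : ℝ) (ha : 0 < a) (hab : a < b) (n : ℕ) (hn : 1 ≤ n)
    (μ : Fin n → ℝ)
    (hμ : ∀ m : Fin n, μ m = (b + a) / 2 +
      (b - a) / 2 * Real.cos ((2 * (m : ℝ) + 1) * π / (2 * n)))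
    (q : Polynomial ℝ) (hq : q.natDegree ≤ n) (hq0 : q.eval 0 = 1) :
    ∃ x ∈ Set.Icc a b,
      ((b-a)/2)^n / (2^(n-1) * ∏ m : Fin n, μ m) ≤ |q.eval x| := by
  by_contra hcon
  push_neg at hcon
  set M : ℝ := ((b-a)/2)^n / (2^(n-1) * ∏ m : Fin n, μ m) with hM
  have hd : (0:ℝ) < (b-a)/2 := by linarith
  have hμp := mu_pos a b ha hab n μ hμ
  have hprod : (0:ℝ) < ∏ m : Fin n, μ m := Finset.prod_pos fun m _ => hμp m
  have hMpos : 0 < M := div_pos (pow_pos hd n) (mul_pos (by positivity) hprod)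
  -- the polynomial Qp with Qp.eval x = ∏ (1 - x/μ m)
  set Qp : ℝ[X] := ∏ m : Fin n, (1 - C (μ m)⁻¹ * X) with hQp
  have hQeval : ∀ x : ℝ, Qp.eval x = ∏ m : Fin n, (1 - x/μ m) := by
    intro x
    rw [hQp, Polynomial.eval_prod]
    refine Finset.prod_congr rfl fun m _ => ?_
    rw [Polynomial.eval_sub, Polynomial.eval_one, Polynomial.eval_mul, Polynomial.eval_C,
      Polynomial.eval_X, div_eq_mul_inv, mul_comm ((μ m)⁻¹) x]
  have hQdeg : Qp.natDegree ≤ n := by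
    rw [hQp]
    refine (Polynomial.natDegree_prod_le _ _).trans ?_
    have : ∀ m : Fin n, ((1 : ℝ[X]) - C (μ m)⁻¹ * X).natDegree ≤ 1 := by
      intro m
      refine (natDegree_sub_le _ _).trans ?_
      have hC := natDegree_C_mul_le ((μ m)⁻¹) (X : ℝ[X])
      simp only [natDegree_one, natDegree_X] at *
      omega
    have h2 : ∑ m : Fin n, ((1:ℝ[X]) - C (μ m)⁻¹ * X).natDegree ≤ ∑ _m : Fin n, (1:ℕ) :=
      Finset.sum_le_sum fun m _ => this m
    simpa using h2
  -- D vanishing polynomial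
  set D : ℝ[X] := Qp - q with hD
  have hDdeg : D.natDegree ≤ n := (natDegree_sub_le _ _).trans (sup_le hQdeg hq)
  have hD0 : D.eval 0 = 0 := by
    rw [hD, Polynomial.eval_sub, hQeval, hq0]
    simp
  -- equioscillation points
  set xpt : ℕ → ℝ := fun k => (b+a)/2 + (b-a)/2 * Real.cos ((k:ℝ)*π/(n:ℝ)) with hxpt
  have hxmem : ∀ k : ℕ, xpt k ∈ Set.Icc a b := fun k => xpt_mem a b ha hab n hn k
  have hQx : ∀ k : ℕ, Qp.eval (xpt k) = (-1:ℝ)^(n+k) * M := by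
    intro k
    rw [hQeval, hxpt]
    exact Qosc a b ha hab n hn μ hμ k
  have hsq : ∀ k : ℕ, ((-1:ℝ)^(n+k)) * ((-1:ℝ)^(n+k)) = 1 := by
    intro k
    rw [← pow_add, ← two_mul, pow_mul]
    norm_num
  have hsign : ∀ k : ℕ, 0 < (-1:ℝ)^(n+k) * D.eval (xpt k) := by
    intro k
    have hql : |q.eval (xpt k)| < M := hcon (xpt k) (hxmem k)
    have h1 : (-1:ℝ)^(n+k) * q.eval (xpt k) ≤ |q.eval (xpt k)| := by
      rcases Nat.even_or_odd (n+k) with he | ho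
      · rw [he.neg_one_pow, one_mul]; exact le_abs_self _
      · rw [ho.neg_one_pow, neg_one_mul]; exact neg_le_abs _
    have : (-1:ℝ)^(n+k) * D.eval (xpt k)
        = M - (-1:ℝ)^(n+k) * q.eval (xpt k) := by
      rw [hD, Polynomial.eval_sub, hQx k, mul_sub, ← mul_assoc, hsq k, one_mul]
    rw [this]
    linarith
  -- roots between consecutive points
  have hroot : ∀ k : Fin n, ∃ y ∈ Set.Ioo (xpt (k+1)) (xpt k), D.eval y = 0 := by
    intro k
    apply ivt_helper _ D.continuous _ _
      (xpt_anti a b hab n hn k (k+1) (lt_add_one _) k.2)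
    have p1 := hsign (k+1)
    have p2 := hsign k
    have hs : (-1:ℝ)^(n+(k+1)) = -(-1:ℝ)^(n+(k:ℕ)) := by
      rw [← add_assoc, pow_succ]
      ring
    rw [hs] at p1
    nlinarith [mul_pos p1 p2, hsq (k:ℕ)]
  choose y hy1 hy2 using hroot
  have hypos : ∀ k : Fin n, 0 < y k := by
    intro k
    have := (hy1 k).1
    have := (hxmem (k+1)).1
    linarith
  have hyanti : ∀ i j : Fin n, (i:ℕ) < (j:ℕ) → y j < y i := by
    intro i j hij
    have h1 : y j < xpt j := (hy1 j).2
    have h2 : xpt (j:ℕ) ≤ xpt ((i:ℕ)+1) := by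
      rcases eq_or_lt_of_le (by omega : (i:ℕ)+1 ≤ (j:ℕ)) with he | hl
      · rw [he]
      · exact le_of_lt (xpt_anti a b hab n hn ((i:ℕ)+1) (j:ℕ) hl (le_of_lt j.2))
    have h3 : xpt ((i:ℕ)+1) < y i := (hy1 i).1
    linarith
  have hyinj : Function.Injective y := by
    intro i j hij
    by_contra hne
    rcases Nat.lt_or_ge (i:ℕ) (j:ℕ) with h | h
    · exact absurd hij (ne_of_gt (hyanti i j h))
    · rcases eq_or_lt_of_le h with he | hl
      · exact hne (Fin.ext he.symm)
      · exact absurd hij (ne_of_lt (hyanti j i hl))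
  -- D has n+1 distinct roots
  have hDzero : D = 0 := by
    classical
    apply Polynomial.eq_zero_of_natDegree_lt_card_of_eval_eq_zero' D
      (insert (0:ℝ) (Finset.image y Finset.univ))
    · intro z hz
      rcases Finset.mem_insert.mp hz with rfl | hz
      · exact hD0
      · obtain ⟨k, _, rfl⟩ := Finset.mem_image.mp hz
        exact hy2 k
    · have h0 : (0:ℝ) ∉ Finset.image y Finset.univ := by
        intro h0
        obtain ⟨k, _, hk⟩ := Finset.mem_image.mp h0
        exact (hypos k).ne' hk
      rw [Finset.card_insert_of_notMem h0, Finset.card_image_of_injective _ hyinj]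
      simp
      omega
  -- contradiction at x = b
  have hb : xpt 0 = b := by
    rw [hxpt]
    norm_num
    ring
  have : q.eval b = Qp.eval b := by
    have := sub_eq_zero.mp hDzero
    rw [this]
  have habs : |q.eval b| = M := by
    rw [this, ← hb, hQx 0]
    rw [abs_mul, abs_pow, abs_neg, abs_one, one_pow, one_mul, abs_of_pos hMpos]
  have := hcon b ⟨le_of_lt hab, le_refl b⟩
  rw [habs] at this
  exact lt_irrefl _ this

lemma complex_lb (φ : ℝ) (n : ℕ) (ν : Fin n → ℂ) (hν : ∀ m, ν m ≠ 0) :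
    ∃ q : Polynomial ℝ, q.natDegree ≤ n ∧ q.eval 0 = 1 ∧
      ∀ x : ℝ, |q.eval x| ≤
        ‖∏ m : Fin n, (1 - (Complex.exp (φ * Complex.I) * (x:ℂ)) / ν m)‖ := by
  classical
  set e : ℂ := Complex.exp (φ * Complex.I) with he
  set P : Polynomial ℂ := ∏ m : Fin n, (1 - Polynomial.C (e * (ν m)⁻¹) * Polynomial.X)
    with hP
  have hPeval : ∀ x : ℝ, P.eval (x:ℂ) = ∏ m : Fin n, (1 - (e * (x:ℂ)) / ν m) := by
    intro x
    rw [hP, Polynomial.eval_prod]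
    refine Finset.prod_congr rfl fun m _ => ?_
    rw [Polynomial.eval_sub, Polynomial.eval_one, Polynomial.eval_mul, Polynomial.eval_C,
      Polynomial.eval_X, div_eq_mul_inv]
    ring
  have hPdeg : P.natDegree ≤ n := by
    rw [hP]
    refine (Polynomial.natDegree_prod_le _ _).trans ?_
    have h1 : ∀ m : Fin n,
        ((1 : Polynomial ℂ) - Polynomial.C (e * (ν m)⁻¹) * Polynomial.X).natDegree ≤ 1 := by
      intro m
      refine (Polynomial.natDegree_sub_le _ _).trans ?_
      have hC := Polynomial.natDegree_C_mul_le (e * (ν m)⁻¹) (Polynomial.X : Polynomial ℂ)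
      simp only [Polynomial.natDegree_one, Polynomial.natDegree_X] at *
      omega
    have h2 : ∑ m : Fin n,
        ((1 : Polynomial ℂ) - Polynomial.C (e * (ν m)⁻¹) * Polynomial.X).natDegree
        ≤ ∑ _m : Fin n, (1:ℕ) := Finset.sum_le_sum fun m _ => h1 m
    simpa using h2
  have hP0 : P.eval 0 = 1 := by
    rw [hP, Polynomial.eval_prod]
    simp
  set q : Polynomial ℝ := ∑ k ∈ Finset.range (n+1), Polynomial.C ((P.coeff k).re)
    * Polynomial.X ^ k with hq
  have hqeval : ∀ x : ℝ, q.eval x = (P.eval (x:ℂ)).re := by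
    intro x
    have hPx : P.eval (x:ℂ) = ∑ k ∈ Finset.range (n+1), P.coeff k * (x:ℂ)^k :=
      Polynomial.eval_eq_sum_range' (by omega) _
    rw [hPx, Complex.re_sum, hq, Polynomial.eval_finset_sum]
    refine Finset.sum_congr rfl fun k _ => ?_
    simp [Complex.mul_re, ← Complex.ofReal_pow]
  have hqdeg : q.natDegree ≤ n := by
    rw [hq]
    refine (Polynomial.natDegree_sum_le _ _).trans ?_
    rw [Finset.fold_max_le]
    refine ⟨Nat.zero_le n, fun k hk => ?_⟩
    simp only [Function.comp_apply]
    refine (Polynomial.natDegree_C_mul_le _ _).trans ?_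
    rw [Polynomial.natDegree_X_pow]
    exact Nat.lt_succ_iff.mp (Finset.mem_range.mp hk)
  refine ⟨q, hqdeg, ?_, ?_⟩
  · rw [show (0:ℝ) = ((0:ℝ)) from rfl, hqeval 0]
    rw [Complex.ofReal_zero, hP0]
    simp
  · intro x
    rw [hqeval x, ← hPeval x]
    exact Complex.abs_re_le_norm _

/-- Rotating the optimal Chebyshev points: for the segment `e^{iφ}[a,b]` on a ray
from the origin, the minimum over all parameter choices `ν_m` of
`max_{z ∈ e^{iφ}[a,b]} |∏ (1 - z/ν_m)|` equals the real minimax value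
`max_{x ∈ [a,b]} |∏ (1 - x/μ_m)|`, and it is attained at `ν_m = e^{iφ} μ_m`. -/
theorem stmt12 (a b : ℝ) (ha : 0 < a) (hab : a < b) (φ : ℝ) (n : ℕ) (hn : 1 ≤ n)
    (μ : Fin n → ℝ)
    (hμ : ∀ m : Fin n, μ m = (b + a) / 2 +
      (b - a) / 2 * Real.cos ((2 * (m : ℝ) + 1) * π / (2 * n))) :
    IsLeast
      { r : ℝ | ∃ ν : Fin n → ℂ, (∀ m, ν m ≠ 0) ∧
          r = sSup ((fun z : ℂ => ‖∏ m : Fin n, (1 - z / ν m)‖) ''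
            ((fun x : ℝ => Complex.exp (φ * Complex.I) * (x : ℂ)) '' Set.Icc a b)) }
      (sSup ((fun x : ℝ => |∏ m : Fin n, (1 - x / μ m)|) '' Set.Icc a b)) := by
  have he0 : Complex.exp (φ * Complex.I) ≠ 0 := Complex.exp_ne_zero _
  have hμp := mu_pos a b ha hab n μ hμ
  have hG := supQ a b ha hab n hn μ hμ
  have hsup : sSup ((fun x : ℝ => |∏ m : Fin n, (1 - x / μ m)|) '' Set.Icc a b)
      = ((b-a)/2)^n / (2^(n-1) * ∏ m : Fin n, μ m) := hG.csSup_eq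
  constructor
  · refine ⟨fun m => Complex.exp (φ * Complex.I) * (μ m : ℂ),
      fun m => mul_ne_zero he0 (Complex.ofReal_ne_zero.mpr (hμp m).ne'), ?_⟩
    rw [Set.image_image]
    refine congrArg sSup (Set.image_congr fun x _ => ?_)
    have hfac : ∀ m : Fin n,
        1 - (Complex.exp (φ * Complex.I) * (x:ℂ)) / (Complex.exp (φ * Complex.I) * (μ m : ℂ))
          = ((1 - x/μ m : ℝ) : ℂ) := by
      intro m
      rw [mul_div_mul_left _ _ he0]
      push_cast
      ring
    rw [Finset.prod_congr rfl fun m _ => hfac m, ← Complex.ofReal_prod, Complex.norm_real, Real.norm_eq_abs]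
  · rintro r ⟨ν, hν, rfl⟩
    rw [hsup, Set.image_image]
    obtain ⟨q, hq1, hq2, hq3⟩ := complex_lb φ n ν hν
    obtain ⟨x, hx, hxM⟩ := real_minimax a b ha hab n hn μ hμ q hq1 hq2
    have hcont : Continuous (fun x : ℝ =>
        ‖∏ m : Fin n, (1 - Complex.exp (φ * Complex.I) * (x:ℂ) / ν m)‖) := by
      apply continuous_norm.comp
      apply continuous_finset_prod
      intro m _
      exact continuous_const.sub ((continuous_const.mul Complex.continuous_ofReal).div_const _)
    have hbdd : BddAbove ((fun x : ℝ =>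
        ‖∏ m : Fin n, (1 - Complex.exp (φ * Complex.I) * (x:ℂ) / ν m)‖) ''
          Set.Icc a b) := (isCompact_Icc.image hcont).bddAbove
    refine le_trans (le_trans hxM (hq3 x)) (le_csSup hbdd ⟨x, hx, rfl⟩)
end

section
/- Let K be a compact subset of ℂ whose convex hull does not contain 0, and let μ₀ be the center of the smallest-angle enclosing disk S₀ (the disk containing K seen from the origin at minimal angle α₀). If K is a segment [p, q] ⊂ ℂ (with 0 ∉ [p,q]’s convex hull trivially, assuming 0 ∉ line through p,q or 0 outside segment), then μ₀ lies on the perpendicular bisector of [p,q] and on the circle through p, q, and 0, and [p,q] is a chord of S₀. -/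
open Complex

lemma quad_min (A B ε : ℝ) (hε : 0 < ε)
    (h : ∀ t : ℝ, |t| < ε → 0 ≤ A * t ^ 2 + B * t) : B = 0 := by
  by_contra hB
  have hB' : 0 < |B| := abs_pos.mpr hB
  set δ : ℝ := min (ε / (2 * (|B| + 1))) (1 / (|A| + 1)) with hδdef
  have hδpos : 0 < δ := lt_min (by positivity) (by positivity)
  have hδ1 : δ ≤ ε / (2 * (|B| + 1)) := min_le_left _ _
  have hδ2 : δ ≤ 1 / (|A| + 1) := min_le_right _ _
  have key : |B| * (ε / (2 * (|B| + 1))) < ε := by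
    rw [mul_div_assoc']
    rw [div_lt_iff₀ (by positivity)]
    nlinarith
  have ht : |(-B * δ)| < ε := by
    rw [abs_mul, abs_neg, abs_of_pos hδpos]
    nlinarith [abs_nonneg B]
  have h0 := h (-B * δ) ht
  have hAd : A * δ < 1 := by
    have h1 : A ≤ |A| := le_abs_self A
    have h2 : |A| * δ ≤ |A| * (1 / (|A| + 1)) := by nlinarith [abs_nonneg A]
    have h3 : |A| * (1 / (|A| + 1)) < 1 := by
      rw [mul_one_div, div_lt_one (by positivity)]; linarith
    nlinarith [abs_nonneg A]
  have hB2 : 0 < B ^ 2 := by nlinarith [_root_.sq_abs B]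
  have hmul := mul_lt_mul_of_pos_left hAd (mul_pos hB2 hδpos)
  have expand : A * (-B * δ) ^ 2 + B * (-B * δ) = B ^ 2 * δ * (A * δ) - B ^ 2 * δ * 1 := by
    ring
  linarith [h0, hmul, expand.symm ▸ h0]

lemma normSq_expand (z w : ℂ) (t : ℝ) :
    normSq (z + (t : ℂ) * w) =
      normSq z + 2 * t * (z * (starRingEnd ℂ) w).re + t ^ 2 * normSq w := by
  simp [Complex.normSq_apply, Complex.mul_re, Complex.mul_im, Complex.add_re, Complex.add_im]
  ring

lemma abs_eq_of_normSq_eq {x y : ℂ} (h : normSq x = normSq y) :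
    ‖x‖ = ‖y‖ := by
  rw [Complex.norm_def, Complex.norm_def, h]

lemma tri_up (x y : ℂ) : ‖x + y‖ ≤ ‖x‖ + ‖y‖ :=
  norm_add_le x y

lemma tri_lo (x y : ℂ) : ‖x‖ - ‖y‖ ≤ ‖x + y‖ := by
  have h := norm_add_le (x + y) (-y)
  simp only [add_neg_cancel_right, map_neg, norm_neg] at h
  linarith

lemma ratio_sq (μ₀ μ : ℂ) (R₀ R : ℝ) (hR₀ : 0 ≤ R₀) (hR : 0 ≤ R)
    (h0 : R₀ < ‖μ₀‖) (h1 : R < ‖μ‖)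
    (h : R₀ / ‖μ₀‖ ≤ R / ‖μ‖) :
    R₀ ^ 2 * normSq μ ≤ R ^ 2 * normSq μ₀ := by
  have hm0 : 0 < ‖μ₀‖ := lt_of_le_of_lt hR₀ h0
  have hm : 0 < ‖μ‖ := lt_of_le_of_lt hR h1
  rw [div_le_div_iff₀ hm0 hm] at h
  have h2 : (R₀ * ‖μ‖) ^ 2 ≤ (R * ‖μ₀‖) ^ 2 :=
    pow_le_pow_left₀ (by positivity) h 2
  calc R₀ ^ 2 * normSq μ = (R₀ * ‖μ‖) ^ 2 := by
        rw [← Complex.sq_norm]; ring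
    _ ≤ (R * ‖μ₀‖) ^ 2 := h2
    _ = R ^ 2 * normSq μ₀ := by rw [← Complex.sq_norm]; ring

lemma boundary (p q μ₀ : ℂ) (R₀ : ℝ)
    (hout : R₀ < ‖μ₀‖)
    (hopt : ∀ (μ : ℂ) (R : ℝ), 0 ≤ R → segment ℝ p q ⊆ Metric.closedBall μ R →
      R < ‖μ‖ → R₀ / ‖μ₀‖ ≤ R / ‖μ‖)
    (hp : ‖μ₀ - p‖ = R₀) (hq : ‖μ₀ - q‖ < R₀) : False := by
  set N := normSq μ₀ with hN
  have hqnn : 0 ≤ ‖μ₀ - q‖ := norm_nonneg _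
  have hR₀pos : 0 < R₀ := lt_of_le_of_lt hqnn hq
  set ε : ℝ := min ((R₀ - ‖μ₀ - q‖) / 2) ((‖μ₀‖ - R₀) / 2) with hε
  have hεpos : 0 < ε := lt_min (by linarith) (by linarith)
  have main : ∀ v : ℂ, ‖v‖ = 1 →
      ((μ₀ - p) * (starRingEnd ℂ) v).re * N - R₀ ^ 2 * (μ₀ * (starRingEnd ℂ) v).re = 0 := by
    intro v hv
    have hvns : normSq v = 1 := by rw [← Complex.sq_norm, hv]; norm_num
    have h2 := quad_min (N - R₀ ^ 2)
      (2 * (((μ₀ - p) * (starRingEnd ℂ) v).re * N - R₀ ^ 2 * (μ₀ * (starRingEnd ℂ) v).re)) ε hεpos ?_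
    · linarith
    intro t ht
    set μ : ℂ := μ₀ + (t : ℂ) * v with hμ
    set R : ℝ := ‖μ - p‖ with hRdef
    have htv : ‖(t : ℂ) * v‖ = |t| := by
      rw [norm_mul, hv, Complex.norm_real, Real.norm_eq_abs, mul_one]
    have hμp : μ - p = (μ₀ - p) + (t : ℂ) * v := by rw [hμ]; ring
    have hμq : μ - q = (μ₀ - q) + (t : ℂ) * v := by rw [hμ]; ring
    have hμ0 : μ = μ₀ + (t : ℂ) * v := hμ
    have hRlow : R₀ - |t| ≤ R := by
      have := tri_lo (μ₀ - p) ((t : ℂ) * v)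
      rw [htv, hp, ← hμp] at this; exact this
    have hRhigh : R ≤ R₀ + |t| := by
      have := tri_up (μ₀ - p) ((t : ℂ) * v)
      rw [htv, hp, ← hμp] at this; exact this
    have habsμ : ‖μ₀‖ - |t| ≤ ‖μ‖ := by
      have := tri_lo μ₀ ((t : ℂ) * v)
      rw [htv, ← hμ0] at this; exact this
    have htε1 : |t| < (R₀ - ‖μ₀ - q‖) / 2 := lt_of_lt_of_le ht (min_le_left _ _)
    have htε2 : |t| < (‖μ₀‖ - R₀) / 2 := lt_of_lt_of_le ht (min_le_right _ _)
    have hRnn : 0 ≤ R := norm_nonneg _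
    have hsub' : segment ℝ p q ⊆ Metric.closedBall μ R := by
      apply (convex_closedBall μ R).segment_subset
      · rw [Metric.mem_closedBall, Complex.dist_eq, ← norm_neg]
        simp only [neg_sub]
        exact le_of_eq hRdef.symm
      · rw [Metric.mem_closedBall, Complex.dist_eq, ← norm_neg]
        simp only [neg_sub]
        have h3 : ‖μ - q‖ ≤ ‖μ₀ - q‖ + |t| := by
          have := tri_up (μ₀ - q) ((t : ℂ) * v)
          rw [htv, ← hμq] at this; exact this
        have habt : 0 ≤ |t| := abs_nonneg t
        linarith
    have hRlt : R < ‖μ‖ := by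
      have habt : 0 ≤ |t| := abs_nonneg t
      linarith
    have hineq := ratio_sq μ₀ μ R₀ R (le_of_lt hR₀pos) hRnn hout hRlt
      (hopt μ R hRnn hsub' hRlt)
    have e1 : normSq (μ - p) =
        R₀ ^ 2 + 2 * t * ((μ₀ - p) * (starRingEnd ℂ) v).re + t ^ 2 := by
      rw [hμp, normSq_expand, hvns, ← Complex.sq_norm, hp]; ring
    have e2 : normSq μ = N + 2 * t * (μ₀ * (starRingEnd ℂ) v).re + t ^ 2 := by
      rw [hμ0, normSq_expand, hvns, hN]; ring
    have e3 : R ^ 2 = normSq (μ - p) := Complex.sq_norm _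
    rw [e3, e1, e2] at hineq
    nlinarith [hineq]
  have E1 := main 1 (by simp)
  have E2 := main Complex.I (by simp)
  simp only [map_one, mul_one] at E1
  have hconjI : (starRingEnd ℂ) Complex.I = -Complex.I := Complex.conj_I
  rw [hconjI] at E2
  have hre2 : ∀ z : ℂ, (z * (-Complex.I)).re = z.im := by
    intro z; simp [Complex.mul_re]
  rw [hre2, hre2] at E2
  have hpn : (μ₀ - p).re ^ 2 + (μ₀ - p).im ^ 2 = R₀ ^ 2 := by
    have h4 := Complex.sq_norm (μ₀ - p)
    rw [hp, Complex.normSq_apply] at h4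
    nlinarith [h4]
  have hN2 : μ₀.re ^ 2 + μ₀.im ^ 2 = N := by
    rw [hN, Complex.normSq_apply]; ring
  have hNpos : 0 < N := by nlinarith [Complex.sq_norm μ₀, hout, hR₀pos]
  have hNgt : R₀ ^ 2 < N := by
    have := Complex.sq_norm μ₀
    nlinarith
  have k1 : (μ₀ - p).re ^ 2 * N ^ 2 = R₀ ^ 4 * μ₀.re ^ 2 := by
    linear_combination ((μ₀ - p).re * N + R₀ ^ 2 * μ₀.re) * E1
  have k2 : (μ₀ - p).im ^ 2 * N ^ 2 = R₀ ^ 4 * μ₀.im ^ 2 := by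
    linear_combination ((μ₀ - p).im * N + R₀ ^ 2 * μ₀.im) * E2
  have k3 : R₀ ^ 2 * N ^ 2 = R₀ ^ 4 * N := by
    linear_combination k1 + k2 - N ^ 2 * hpn + R₀ ^ 4 * hN2
  have hposs : 0 < R₀ ^ 2 * N * (N - R₀ ^ 2) :=
    mul_pos (mul_pos (pow_pos hR₀pos 2) hNpos) (by linarith)
  nlinarith [k3, hposs]

lemma decomp (z d : ℂ) (hd : d ≠ 0) (h : (z * (starRingEnd ℂ) d).re = 0) :
    z = (((z * (starRingEnd ℂ) (I * d)).re / normSq d : ℝ) : ℂ) * (I * d) := by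
  have hB : normSq d ≠ 0 := by
    simpa [Complex.normSq_eq_zero] using hd
  have hB' : d.re * d.re + d.im * d.im ≠ 0 := by rwa [Complex.normSq_apply] at hB
  simp only [Complex.mul_re, Complex.mul_im, Complex.conj_re, Complex.conj_im,
    Complex.I_re, Complex.I_im, Complex.normSq_apply] at h ⊢
  apply Complex.ext
  · simp only [Complex.mul_re, Complex.mul_im, Complex.ofReal_re, Complex.ofReal_im,
      Complex.add_re, Complex.add_im, Complex.I_re, Complex.I_im]
    have hB2 : d.re ^ 2 + d.im ^ 2 ≠ 0 := by rw [sq, sq]; exact hB'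
    field_simp
    linear_combination d.re * h
  · simp only [Complex.mul_re, Complex.mul_im, Complex.ofReal_re, Complex.ofReal_im,
      Complex.add_re, Complex.add_im, Complex.I_re, Complex.I_im]
    have hB2 : d.re ^ 2 + d.im ^ 2 ≠ 0 := by rw [sq, sq]; exact hB'
    field_simp
    linear_combination d.im * h

lemma line_zero (p q : ℂ) (hd : q - p ≠ 0)
    (hline : ∀ t : ℝ, (0 : ℂ) ≠ p + t • (q - p))
    (h : (((((1 : ℝ) / 2) : ℝ) : ℂ) * (p + q) * (starRingEnd ℂ) (I * (q - p))).re = 0) :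
    False := by
  set d : ℂ := q - p with hddef
  set m : ℂ := ((((1 : ℝ) / 2) : ℝ) : ℂ) * (p + q) with hmdef
  have hId : I * d ≠ 0 := mul_ne_zero Complex.I_ne_zero hd
  have hdec := decomp m (I * d) hId h
  set r : ℝ := (m * (starRingEnd ℂ) (I * (I * d))).re / normSq (I * d) with hrdef
  have hII : I * (I * d) = -d := by
    rw [← mul_assoc, Complex.I_mul_I]; ring
  rw [hII] at hdec
  apply hline ((1 : ℝ) / 2 + r)
  have hgoal : p + ((1 : ℝ) / 2 + r) • (q - p) = 0 := by
    rw [Complex.real_smul]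
    push_cast
    rw [hmdef] at hdec
    push_cast at hdec
    linear_combination hdec
  rw [hgoal]

lemma orthQ (d : ℂ) (r : ℝ) : (((r : ℝ) : ℂ) * d * (starRingEnd ℂ) (I * d)).re = 0 := by
  simp only [Complex.mul_re, Complex.mul_im, Complex.conj_re, Complex.conj_im,
    Complex.I_re, Complex.I_im, Complex.ofReal_re, Complex.ofReal_im]
  ring

lemma normSq_real_mul (r : ℝ) (w : ℂ) : normSq (((r : ℝ) : ℂ) * w) = r ^ 2 * normSq w := by
  rw [Complex.normSq_mul, Complex.normSq_ofReal]; ring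

set_option maxHeartbeats 1000000 in
/-- Proposition 2.1: if `K = [p, q]` is a segment in `ℂ` not containing `0` (and `0`
is not on the line through `p, q`), and `S₀ = closedBall μ₀ R₀` is an enclosing disk
not containing `0` minimizing the visual angle from the origin (i.e. minimizing
`R/|μ|`), then `μ₀` is equidistant from `p` and `q` at distance `R₀` (the segment is
a chord, so `μ₀` lies on the perpendicular bisector of `[p,q]`) and `μ₀` lies on the
circle through `p`, `q`, and `0`. -/
theorem stmt19 (p q : ℂ) (hpq : p ≠ q)
    (hline : ∀ t : ℝ, (0 : ℂ) ≠ p + t • (q - p))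
    (μ₀ : ℂ) (R₀ : ℝ) (hR₀ : 0 ≤ R₀)
    (hsub : segment ℝ p q ⊆ Metric.closedBall μ₀ R₀)
    (hout : R₀ < ‖μ₀‖)
    (hopt : ∀ (μ : ℂ) (R : ℝ), 0 ≤ R → segment ℝ p q ⊆ Metric.closedBall μ R →
      R < ‖μ‖ → R₀ / ‖μ₀‖ ≤ R / ‖μ‖) :
    ‖μ₀ - p‖ = R₀ ∧ ‖μ₀ - q‖ = R₀ ∧
      ∃ c : ℂ, ∃ ρ : ℝ, ‖c - p‖ = ρ ∧ ‖c - q‖ = ρ ∧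
        ‖c‖ = ρ ∧ ‖c - μ₀‖ = ρ := by
  have habs0 : 0 < ‖μ₀‖ := lt_of_le_of_lt hR₀ hout
  -- distances of endpoints at most R₀
  have hple : ‖μ₀ - p‖ ≤ R₀ := by
    have h1 := hsub (left_mem_segment ℝ p q)
    rw [Metric.mem_closedBall, Complex.dist_eq, ← norm_neg, neg_sub] at h1
    exact h1
  have hqle : ‖μ₀ - q‖ ≤ R₀ := by
    have h1 := hsub (right_mem_segment ℝ p q)
    rw [Metric.mem_closedBall, Complex.dist_eq, ← norm_neg, neg_sub] at h1
    exact h1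
  -- optimality with the max radius forces R₀ ≤ max
  have hmaxle : R₀ ≤ max (‖μ₀ - p‖) (‖μ₀ - q‖) := by
    set M := max (‖μ₀ - p‖) (‖μ₀ - q‖) with hM
    have hMnn : 0 ≤ M := le_trans (norm_nonneg _) (le_max_left _ _)
    have hMsub : segment ℝ p q ⊆ Metric.closedBall μ₀ M := by
      apply (convex_closedBall μ₀ M).segment_subset
      · rw [Metric.mem_closedBall, Complex.dist_eq, ← norm_neg, neg_sub]
        exact le_max_left _ _
      · rw [Metric.mem_closedBall, Complex.dist_eq, ← norm_neg, neg_sub]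
        exact le_max_right _ _
    have hMlt : M < ‖μ₀‖ := lt_of_le_of_lt (max_le hple hqle) hout
    have h2 := hopt μ₀ M hMnn hMsub hMlt
    rw [div_le_div_iff₀ habs0 habs0] at h2
    exact le_of_mul_le_mul_right h2 habs0
  -- symmetric optimality hypothesis
  have hopt' : ∀ (μ : ℂ) (R : ℝ), 0 ≤ R → segment ℝ q p ⊆ Metric.closedBall μ R →
      R < ‖μ‖ → R₀ / ‖μ₀‖ ≤ R / ‖μ‖ := by
    intro μ R h1 h2 h3
    exact hopt μ R h1 (by rwa [segment_symm] at h2) h3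
  have hp : ‖μ₀ - p‖ = R₀ := by
    rcases eq_or_lt_of_le hple with h | h
    · exact h
    · exfalso
      have hqeq : ‖μ₀ - q‖ = R₀ := by
        rcases max_cases (‖μ₀ - p‖) (‖μ₀ - q‖) with ⟨he, _⟩ | ⟨he, _⟩ <;>
          rw [he] at hmaxle <;> linarith
      exact boundary q p μ₀ R₀ hout hopt' hqeq (hqeq ▸ h)
  have hq : ‖μ₀ - q‖ = R₀ := by
    rcases eq_or_lt_of_le hqle with h | h
    · exact h
    · exact absurd (boundary p q μ₀ R₀ hout hopt hp h) not_false
  refine ⟨hp, hq, ?_⟩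
  -- setup
  set d : ℂ := q - p with hddef
  have hd : d ≠ 0 := sub_ne_zero.mpr (Ne.symm hpq)
  set m : ℂ := ((((1 : ℝ) / 2) : ℝ) : ℂ) * (p + q) with hmdef
  set Bq : ℝ := normSq d with hBqdef
  have hBpos : 0 < Bq := Complex.normSq_pos.mpr hd
  set b : ℝ := normSq m with hbdef
  set c₀ : ℝ := (m * (starRingEnd ℂ) (I * d)).re with hc₀def
  have hc₀ : c₀ ≠ 0 := fun h => line_zero p q hd hline h
  have hmp : m - p = ((((1 : ℝ) / 2) : ℝ) : ℂ) * d := by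
    rw [hmdef, hddef]; push_cast; ring
  have hmq : m - q = ((((-1 : ℝ) / 2) : ℝ) : ℂ) * d := by
    rw [hmdef, hddef]; push_cast; ring
  have hIB : normSq (I * d) = Bq := by
    rw [Complex.normSq_mul, Complex.normSq_I, one_mul]
  -- expansion formulas
  have Ep : ∀ t : ℝ, normSq (m + (t : ℂ) * (I * d) - p) = Bq / 4 + t ^ 2 * Bq := by
    intro t
    have h1 : m + (t : ℂ) * (I * d) - p = (m - p) + (t : ℂ) * (I * d) := by ring
    rw [h1, hmp, normSq_expand, orthQ, normSq_real_mul, hIB]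
    ring
  have Eq' : ∀ t : ℝ, normSq (m + (t : ℂ) * (I * d) - q) = Bq / 4 + t ^ 2 * Bq := by
    intro t
    have h1 : m + (t : ℂ) * (I * d) - q = (m - q) + (t : ℂ) * (I * d) := by ring
    rw [h1, hmq, normSq_expand, orthQ, normSq_real_mul, hIB]
    ring
  have Eμ : ∀ t : ℝ, normSq (m + (t : ℂ) * (I * d)) = b + 2 * t * c₀ + t ^ 2 * Bq := by
    intro t
    rw [normSq_expand, hIB, ← hbdef, ← hc₀def]
  -- μ₀ lies on the perpendicular bisector
  have hp2 : normSq (μ₀ - p) = R₀ ^ 2 := by rw [← Complex.sq_norm, hp]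
  have hq2 : normSq (μ₀ - q) = R₀ ^ 2 := by rw [← Complex.sq_norm, hq]
  have h_orth : ((μ₀ - m) * (starRingEnd ℂ) d).re = 0 := by
    have h3 := hp2; have h4 := hq2
    rw [Complex.normSq_apply] at h3 h4
    simp only [hddef, hmdef, Complex.mul_re, Complex.mul_im, Complex.sub_re, Complex.sub_im,
      Complex.add_re, Complex.add_im, Complex.conj_re, Complex.conj_im,
      Complex.ofReal_re, Complex.ofReal_im] at h3 h4 ⊢
    linear_combination (h3 - h4) / 2
  have hdec := decomp (μ₀ - m) d hd h_orth
  obtain ⟨s, hsdef⟩ : ∃ x : ℝ, x = ((μ₀ - m) * (starRingEnd ℂ) (I * d)).re / normSq d :=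
    ⟨_, rfl⟩
  rw [← hsdef] at hdec
  have hμs : μ₀ = m + (s : ℂ) * (I * d) := by linear_combination hdec
  have F1 : R₀ ^ 2 = Bq / 4 + s ^ 2 * Bq := by
    have h := Ep s
    rw [← hμs] at h
    rw [hp2] at h
    exact h
  have F2 : normSq μ₀ = b + 2 * s * c₀ + s ^ 2 * Bq := by
    rw [hμs]; exact Eμ s
  obtain ⟨P, hPdef⟩ : ∃ x : ℝ, x = b + 2 * s * c₀ - Bq / 4 := ⟨_, rfl⟩
  have hR2lt : R₀ ^ 2 < normSq μ₀ := by
    nlinarith [Complex.sq_norm μ₀, hout, hR₀]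
  have hPpos : 0 < P := by rw [hPdef]; linarith [F1, F2, hR2lt]
  obtain ⟨ε, hεdef⟩ : ∃ x : ℝ, x = P / (2 * |c₀| + 1) := ⟨_, rfl⟩
  have hεpos : 0 < ε := by rw [hεdef]; positivity
  have hεP : ε * (2 * |c₀| + 1) = P := by
    rw [hεdef]; exact div_mul_cancel₀ _ (by positivity)
  -- stationarity along the bisector
  have stat2 := quad_min (Bq * (b + 2 * s * c₀ - Bq / 4))
      (2 * (Bq * s * (b - Bq / 4) + c₀ * (s ^ 2 * Bq - Bq / 4))) ε hεpos ?_
  swap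
  · intro τ hτ
    set μ : ℂ := m + ((s + τ : ℝ) : ℂ) * (I * d) with hμdef
    set R : ℝ := ‖μ - p‖ with hRdef
    have e1 : normSq (μ - p) = Bq / 4 + (s + τ) ^ 2 * Bq := Ep (s + τ)
    have e2 : normSq (μ - q) = Bq / 4 + (s + τ) ^ 2 * Bq := Eq' (s + τ)
    have e3 : normSq μ = b + 2 * (s + τ) * c₀ + (s + τ) ^ 2 * Bq := Eμ (s + τ)
    have hRnn : 0 ≤ R := norm_nonneg _
    have hsub' : segment ℝ p q ⊆ Metric.closedBall μ R := by
      apply (convex_closedBall μ R).segment_subset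
      · rw [Metric.mem_closedBall, Complex.dist_eq]
        apply le_of_eq
        have hpm : p - μ = -(μ - p) := by ring
        rw [hpm, norm_neg, hRdef]
      · rw [Metric.mem_closedBall, Complex.dist_eq]
        apply le_of_eq
        rw [hRdef]
        have hqm : q - μ = -(μ - q) := by ring
        rw [hqm, norm_neg]
        exact abs_eq_of_normSq_eq (e2.trans e1.symm)
    have hquarter : Bq / 4 < b + 2 * (s + τ) * c₀ := by
      have habsτ : -(|c₀| * |τ|) ≤ c₀ * τ := by rw [← abs_mul]; exact neg_abs_le _
      have h7 : |c₀| * |τ| ≤ |c₀| * ε := mul_le_mul_of_nonneg_left (le_of_lt hτ) (abs_nonneg c₀)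
      have h8 : 2 * (|c₀| * ε) < P := by nlinarith [hεP, hεpos]
      linarith [habsτ, h7, h8, hPpos, hPdef]
    have h9 : R ^ 2 < ‖μ‖ ^ 2 := by
      rw [hRdef, Complex.sq_norm, Complex.sq_norm]
      linarith [e1, e3]
    have hlt : R < ‖μ‖ := lt_of_pow_lt_pow_left₀ 2 (norm_nonneg _) h9
    have hineq := ratio_sq μ₀ μ R₀ R hR₀ hRnn hout hlt (hopt μ R hRnn hsub' hlt)
    rw [hRdef, Complex.sq_norm, e1, e3, F2] at hineq
    have idq : (Bq * (b + 2 * s * c₀ - Bq / 4)) * τ ^ 2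
          + (2 * (Bq * s * (b - Bq / 4) + c₀ * (s ^ 2 * Bq - Bq / 4))) * τ
        = (Bq / 4 + (s + τ) ^ 2 * Bq) * (b + 2 * s * c₀ + s ^ 2 * Bq)
          - (Bq / 4 + s ^ 2 * Bq) * (b + 2 * (s + τ) * c₀ + (s + τ) ^ 2 * Bq) := by
      ring
    rw [F1] at hineq
    linarith [hineq, idq, hPdef]
  have stat : Bq * s * (b - Bq / 4) + c₀ * (s ^ 2 * Bq - Bq / 4) = 0 := by linarith
  -- construct the circle through p, q, 0, μ₀
  obtain ⟨σ, hσdef⟩ : ∃ x : ℝ, x = (Bq / 4 - b) / (2 * c₀) := ⟨_, rfl⟩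
  have hσ : 2 * σ * c₀ = Bq / 4 - b := by
    rw [hσdef]; field_simp
  set c : ℂ := m + (σ : ℂ) * (I * d) with hcdef
  refine ⟨c, ‖c - p‖, rfl, ?_, ?_, ?_⟩
  · exact abs_eq_of_normSq_eq ((Eq' σ).trans (Ep σ).symm)
  · apply abs_eq_of_normSq_eq
    have h1 : normSq c = b + 2 * σ * c₀ + σ ^ 2 * Bq := Eμ σ
    have h2 : normSq (c - p) = Bq / 4 + σ ^ 2 * Bq := Ep σ
    rw [h1, h2]; linarith [hσ]
  · apply abs_eq_of_normSq_eq
    have h10 : c₀ * (Bq * s ^ 2 - 2 * Bq * σ * s - Bq / 4) = 0 := by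
      linear_combination stat - Bq * s * hσ
    have key2 : Bq * s ^ 2 - 2 * Bq * σ * s - Bq / 4 = 0 :=
      (mul_eq_zero.mp h10).resolve_left hc₀
    have h11 : c - μ₀ = (((σ - s : ℝ)) : ℂ) * (I * d) := by
      rw [hcdef, hμs]; push_cast; ring
    have h12 : normSq (c - μ₀) = (σ - s) ^ 2 * Bq := by
      rw [h11, normSq_real_mul, hIB]
    have h13 : normSq (c - p) = Bq / 4 + σ ^ 2 * Bq := Ep σ
    rw [h12, h13]; nlinarith [key2]
end
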